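/- If G(v) = 1 − e^{−v/α} for v ≥ 0 (exponential service times with mean α), so that h(t) = α e^{−t/α}, then V(G) = (2e^ρ(1 + ρ ∑_{n=1}^∞ ρⁿ/(n·n!)) − e^{2ρ} − 1)/λ². (This is formula (1.4), the M/M/∞ busy period variance.) -/

import Mathlib

open MeasureTheory Real Set Filter

set_option maxHeartbeats 1000000

lemma intA (a : ℝ) {b : ℝ} (hb : 0 < b) :
    ∫ x in Ioi a, exp (-(b * x)) = exp (-(b * a)) / b := by
  have := MeasureTheory.integral_comp_mul_left_Ioi (fun y => exp (-y)) a hb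
  simp only [smul_eq_mul] at this
  rw [this, integral_exp_neg_Ioi]
  ring

lemma expser (x : ℝ) : exp x - 1 = ∑' n : ℕ, x ^ (n + 1) / (Nat.factorial (n + 1)) := by
  have h : exp x = ∑' n : ℕ, x ^ n / (Nat.factorial n) := by
    rw [Real.exp_eq_exp_ℝ, NormedSpace.exp_eq_tsum_div]
  rw [h, Summable.tsum_eq_zero_add (Real.summable_pow_div_factorial x)]
  simp

lemma sumshift (ρ : ℝ) : Summable (fun n : ℕ => ρ ^ (n + 1) / (Nat.factorial (n + 1))) :=
  (Real.summable_pow_div_factorial ρ).comp_injective (add_left_injective 1)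

noncomputable def Faux (ρ c : ℝ) (n : ℕ) (t : ℝ) : ℝ :=
  ρ ^ (n + 1) / (Nat.factorial (n + 1)) * exp (-(((n : ℝ) + 1) * c) * t)

lemma key {ρ c : ℝ} (hρ : 0 < ρ) (hc : 0 < c) :
    ∫ t in Ioi (0:ℝ), (exp (ρ * exp (-(c * t))) - 1)
      = ∑' n : ℕ, ρ ^ (n + 1) / (Nat.factorial (n + 1)) * (1 / (((n : ℝ) + 1) * c)) := by
  have hpos : ∀ n : ℕ, (0:ℝ) < ((n : ℝ) + 1) * c := fun n => by positivity
  have hptw : ∀ t : ℝ, exp (ρ * exp (-(c * t))) - 1 = ∑' n, Faux ρ c n t := by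
    intro t
    rw [expser]
    refine tsum_congr fun n => ?_
    unfold Faux
    have h1 : exp (-(c * t)) ^ (n + 1) = exp (-(((n : ℝ) + 1) * c) * t) := by
      rw [← Real.exp_nat_mul]; congr 1; push_cast; ring
    rw [mul_pow, h1]; ring
  have hint : ∀ n : ℕ, IntegrableOn (Faux ρ c n) (Ioi 0) volume := by
    intro n
    unfold Faux
    exact (exp_neg_integrableOn_Ioi 0 (hpos n)).const_mul _
  have hval : ∀ n : ℕ, ∫ t in Ioi (0:ℝ), Faux ρ c n t
      = ρ ^ (n + 1) / (Nat.factorial (n + 1)) * (1 / (((n : ℝ) + 1) * c)) := by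
    intro n
    unfold Faux
    simp only [neg_mul]
    rw [MeasureTheory.integral_const_mul, intA 0 (hpos n)]
    simp
  have hFnn : ∀ n t, 0 ≤ Faux ρ c n t := fun n t => by
    unfold Faux; positivity
  have hsum : Summable fun n : ℕ => ∫ t in Ioi (0:ℝ), ‖Faux ρ c n t‖ := by
    have heq : (fun n : ℕ => ∫ t in Ioi (0:ℝ), ‖Faux ρ c n t‖)
        = fun n => ρ ^ (n + 1) / (Nat.factorial (n + 1)) * (1 / (((n : ℝ) + 1) * c)) := by
      ext n
      rw [← hval n]
      congr 1; ext t
      exact Real.norm_of_nonneg (hFnn n t)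
    rw [heq]
    apply Summable.of_nonneg_of_le (fun n => by positivity)
      (fun n => ?_) ((sumshift ρ).mul_right (1 / c))
    apply mul_le_mul_of_nonneg_left ?_ (by positivity)
    apply one_div_le_one_div_of_le hc
    nlinarith [hc.le, Nat.cast_nonneg (α := ℝ) n]
  calc ∫ t in Ioi (0:ℝ), (exp (ρ * exp (-(c * t))) - 1)
      = ∫ t in Ioi (0:ℝ), ∑' n, Faux ρ c n t := by
        congr 1; ext t; exact hptw t
    _ = ∑' n, ∫ t in Ioi (0:ℝ), Faux ρ c n t :=
        (MeasureTheory.integral_tsum_of_summable_integral_norm hint hsum).symm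
    _ = _ := by congr 1; ext n; exact hval n

/-- Formula (1.4): for exponential service times with mean `α`, the M/M/∞ busy period
variance equals `(2e^ρ(1 + ρ ∑_{n=1}^∞ ρⁿ/(n·n!)) - e^{2ρ} - 1)/λ²`. -/
theorem mm_infty_busy_period_variance
    (G : ℝ → ℝ)
    (lam α ρ : ℝ)
    (hlam : 0 < lam)
    (hα : 0 < α)
    (hρ : ρ = lam * α)
    (hG : ∀ v : ℝ, 0 ≤ v → G v = 1 - exp (-v / α))
    (hGneg : ∀ v : ℝ, v < 0 → G v = 0) :
    (2 * exp ρ / lam) * (∫ t in Ioi (0:ℝ), (exp (lam * ∫ v in Ioi t, (1 - G v)) - 1))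
        - ((exp ρ - 1) / lam) ^ 2
      = (2 * exp ρ * (1 + ρ * ∑' n : ℕ, ρ ^ (n + 1) / (((n : ℝ) + 1) * (Nat.factorial (n + 1))))
          - exp (2 * ρ) - 1) / lam ^ 2 := by
  subst hρ
  have hc : (0:ℝ) < α⁻¹ := inv_pos.mpr hα
  have hInner : ∀ t ∈ Ioi (0:ℝ),
      (exp (lam * ∫ v in Ioi t, (1 - G v)) - 1)
        = exp ((lam * α) * exp (-(α⁻¹ * t)) ) - 1 := by
    intro t ht
    have h1 : ∫ v in Ioi t, (1 - G v) = ∫ v in Ioi t, exp (-(α⁻¹ * v)) := by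
      apply setIntegral_congr_fun measurableSet_Ioi
      intro v hv
      have hv0 : (0:ℝ) ≤ v := le_of_lt (lt_trans ht hv)
      simp only
      rw [hG v hv0]
      rw [show -v / α = -(α⁻¹ * v) by rw [neg_div, div_eq_mul_inv, mul_comm]]
      ring
    rw [h1, intA t hc]
    congr 2
    field_simp
  have hI : (∫ t in Ioi (0:ℝ), (exp (lam * ∫ v in Ioi t, (1 - G v)) - 1))
      = ∫ t in Ioi (0:ℝ), (exp ((lam * α) * exp (-(α⁻¹ * t))) - 1) :=
    setIntegral_congr_fun measurableSet_Ioi (fun t ht => hInner t ht)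
  rw [hI, key (by positivity) hc]
  have hS : (∑' n : ℕ, (lam * α) ^ (n + 1) / (Nat.factorial (n + 1)) * (1 / (((n:ℝ) + 1) * α⁻¹)))
      = α * ∑' n : ℕ, (lam * α) ^ (n + 1) / (((n:ℝ) + 1) * (Nat.factorial (n + 1))) := by
    rw [← tsum_mul_left]
    congr 1; ext n
    have hfac : (0:ℝ) < (Nat.factorial (n + 1) : ℝ) := by positivity
    field_simp
  rw [hS]
  rw [show (2:ℝ) * (lam * α) = lam * α + lam * α by ring, exp_add]
  set E := exp (lam * α)
  set S := ∑' n : ℕ, (lam * α) ^ (n + 1) / (((n:ℝ) + 1) * (Nat.factorial (n + 1)))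
  field_simp
  ring
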